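/- arXiv:2211.11473 — 2 statements merged into one kernel-verified Lean document; each statement's English description precedes it below -/
import Mathlib

section
/- Let (E, F) be a resistance form on a set X whose resistance metric R is complete and such that (X,R) is doubling and uniformly perfect. Let {f_n}_{n≥0} ⊆ F satisfy ∑_{n≥0} E(f_n,f_n) < ∞. (1) If sup_{n≥0} f_n(x*) < ∞ for some x* ∈ X, then the pointwise supremum f̄ := sup_{n≥0} f_n is finite everywhere, belongs to F, and satisfies E(f̄,f̄) ≤ ∑_{n≥0} E(f_n,f_n). (2) If inf_{n≥0} f_n(x*) > −∞ for some x* ∈ X, then the pointwise infimum f := inf_{n≥0} f_n is finite everywhere, belongs to F, and satisfies E(f,f) ≤ ∑_{n≥0} E(f_n,f_n). -/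
open Filter Set Metric
open scoped ENNReal Topology

/-- A resistance form `(E, F)` on a set `X` (Kigami):
`F` is a linear subspace of the real-valued functions on `X`, `E` is a nonnegative
symmetric bilinear form on `F` such that (RF1) constants belong to `F` and
`E(u,u) = 0` iff `u` is constant, (RF2) the quotient of `F` by the constants is a
Hilbert space under `E` (stated as completeness of the `E`-seminorm on `F`),
(RF3) points of `X` are separated by `F`, (RF4) for `x ≠ y` the quantity
`R(x,y) = (inf {E(u,u) : u ∈ F, u x = 1, u y = 0})⁻¹` is finite (i.e. the infimum
is positive; an admissible `u` always exists), and (RF5) the Markov property holds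
for the unit truncation. -/
structure ResistanceForm (X : Type*) where
  F : Set (X → ℝ)
  E : (X → ℝ) → (X → ℝ) → ℝ
  zero_mem : (0 : X → ℝ) ∈ F
  add_mem : ∀ {u v : X → ℝ}, u ∈ F → v ∈ F → u + v ∈ F
  smul_mem : ∀ (c : ℝ) {u : X → ℝ}, u ∈ F → c • u ∈ F
  const_mem : ∀ c : ℝ, (fun _ => c) ∈ F
  symm : ∀ u ∈ F, ∀ v ∈ F, E u v = E v u
  add_left : ∀ u ∈ F, ∀ v ∈ F, ∀ w ∈ F, E (u + v) w = E u w + E v w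
  smul_left : ∀ (c : ℝ), ∀ u ∈ F, ∀ v ∈ F, E (c • u) v = c * E u v
  nonneg : ∀ u ∈ F, 0 ≤ E u u
  null_iff_const : ∀ u ∈ F, (E u u = 0 ↔ ∃ c : ℝ, ∀ x, u x = c)
  complete : ∀ u : ℕ → (X → ℝ), (∀ n, u n ∈ F) →
    (∀ ε : ℝ, 0 < ε → ∃ N : ℕ, ∀ m ≥ N, ∀ n ≥ N, E (u m - u n) (u m - u n) < ε) →
    ∃ v ∈ F, ∀ ε : ℝ, 0 < ε → ∃ N : ℕ, ∀ n ≥ N, E (v - u n) (v - u n) < ε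
  sep : ∀ x y : X, x ≠ y → ∃ u ∈ F, u x ≠ u y
  exists_unit : ∀ x y : X, x ≠ y → ∃ u ∈ F, u x = 1 ∧ u y = 0
  inf_pos : ∀ x y : X, x ≠ y →
    0 < sInf {e : ℝ | ∃ u ∈ F, u x = 1 ∧ u y = 0 ∧ E u u = e}
  markov : ∀ u ∈ F, (fun x => max 0 (min 1 (u x))) ∈ F ∧
    E (fun x => max 0 (min 1 (u x))) (fun x => max 0 (min 1 (u x))) ≤ E u u

namespace ResistanceForm

variable {X : Type*}

open Classical in
/-- The resistance metric `R` associated with a resistance form: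
`R(x,x) = 0` and `R(x,y) = (inf {E(u,u) : u ∈ F, u x = 1, u y = 0})⁻¹` for `x ≠ y`. -/
noncomputable def rmetric (rf : ResistanceForm X) (x y : X) : ℝ :=
  if x = y then 0
  else (sInf {e : ℝ | ∃ u ∈ rf.F, u x = 1 ∧ u y = 0 ∧ rf.E u u = e})⁻¹

open Classical in
/-- The resistance `𝓡(A,B)` between two sets: the reciprocal of the minimal energy of
functions that are `≡ 1` on `A` and `≡ 0` on `B` if such functions exist, `0` if no
such function exists, and `∞` if `A` or `B` is empty. -/
noncomputable def setRes (rf : ResistanceForm X) (A B : Set X) : ℝ≥0∞ :=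
  if A.Nonempty ∧ B.Nonempty then
    (if ∃ u ∈ rf.F, (∀ x ∈ A, u x = 1) ∧ (∀ x ∈ B, u x = 0) then
      (ENNReal.ofReal
        (sInf {e : ℝ | ∃ u ∈ rf.F, (∀ x ∈ A, u x = 1) ∧ (∀ x ∈ B, u x = 0) ∧ rf.E u u = e}))⁻¹
    else 0)
  else ⊤

end ResistanceForm

/-- A distance function `ρ` on `X` is doubling: there is `N ∈ ℕ` such that every ball of
radius `2r` is covered by `N` balls of radius `r`. -/
def DoublingOf {X : Type*} (ρ : X → X → ℝ) : Prop :=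
  ∃ N : ℕ, ∀ (x : X) (r : ℝ), ∃ s : Finset X, s.card ≤ N ∧
    {y : X | ρ x y < 2 * r} ⊆ ⋃ z ∈ s, {y : X | ρ z y < r}

/-- A distance function `ρ` on `X` is uniformly perfect: there is `γ > 1` such that
`B(x, γ r) \ B(x, r) ≠ ∅` whenever `B(x,r)` is not the whole space. -/
def UniformlyPerfectOf {X : Type*} (ρ : X → X → ℝ) : Prop :=
  ∃ γ : ℝ, 1 < γ ∧ ∀ (x : X) (r : ℝ), 0 < r → {y : X | ρ x y < r} ≠ Set.univ →
    ({y : X | ρ x y < γ * r} \ {y : X | ρ x y < r}).Nonempty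

section Basic

variable {X : Type*} (rf : ResistanceForm X)

lemma RF.sub_mem {u v : X → ℝ} (hu : u ∈ rf.F) (hv : v ∈ rf.F) : u - v ∈ rf.F := by
  have := rf.add_mem hu (rf.smul_mem (-1) hv)
  rwa [neg_one_smul, ← sub_eq_add_neg] at this

lemma RF.E_add_right {u v w : X → ℝ} (hu : u ∈ rf.F) (hv : v ∈ rf.F) (hw : w ∈ rf.F) :
    rf.E u (v + w) = rf.E u v + rf.E u w := by
  rw [rf.symm u hu (v + w) (rf.add_mem hv hw), rf.add_left v hv w hw u hu,
    rf.symm v hv u hu, rf.symm w hw u hu]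

lemma RF.E_smul_right (c : ℝ) {u v : X → ℝ} (hu : u ∈ rf.F) (hv : v ∈ rf.F) :
    rf.E u (c • v) = c * rf.E u v := by
  rw [rf.symm u hu (c • v) (rf.smul_mem c hv), rf.smul_left c v hv u hu, rf.symm v hv u hu]

lemma RF.E_expand {u v : X → ℝ} (hu : u ∈ rf.F) (hv : v ∈ rf.F) :
    rf.E (u + v) (u + v) = rf.E u u + 2 * rf.E u v + rf.E v v := by
  rw [rf.add_left u hu v hv (u + v) (rf.add_mem hu hv), RF.E_add_right rf hu hu hv,
    RF.E_add_right rf hv hu hv, rf.symm v hv u hu]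
  ring

lemma RF.E_smul_expand (c : ℝ) {u : X → ℝ} (hu : u ∈ rf.F) :
    rf.E (c • u) (c • u) = c ^ 2 * rf.E u u := by
  rw [rf.smul_left c u hu (c • u) (rf.smul_mem c hu), RF.E_smul_right rf c hu hu]
  ring

lemma RF.E_sub_expand {u v : X → ℝ} (hu : u ∈ rf.F) (hv : v ∈ rf.F) :
    rf.E (u - v) (u - v) = rf.E u u - 2 * rf.E u v + rf.E v v := by
  have h : u - v = u + (-1 : ℝ) • v := by rw [neg_one_smul, ← sub_eq_add_neg]
  rw [h, RF.E_expand rf hu (rf.smul_mem (-1) hv), RF.E_smul_right rf _ hu hv,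
    RF.E_smul_expand rf _ hv]
  ring

lemma RF.quad_aux (a b c : ℝ) (ha : 0 ≤ a) (hc : 0 ≤ c)
    (h : ∀ t : ℝ, 0 ≤ c + 2 * (t * b) + t ^ 2 * a) : b ^ 2 ≤ c * a := by
  rcases ha.eq_or_lt with h0 | h0
  · have hb : b = 0 := by
      by_contra hb
      have ht := h (-(c + 1) / (2 * b))
      have he : (-(c + 1) / (2 * b)) * b = -(c + 1) / 2 := by
        field_simp
      rw [← h0, he] at ht
      nlinarith
    rw [hb, ← h0]
    nlinarith
  · have ht := h (-b / a)
    have he : c + 2 * ((-b / a) * b) + (-b / a) ^ 2 * a = c - b ^ 2 / a := by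
      field_simp; ring
    rw [he] at ht
    have : b ^ 2 / a ≤ c := by linarith
    calc b ^ 2 = b ^ 2 / a * a := by field_simp
      _ ≤ c * a := by nlinarith

lemma RF.E_cs {u v : X → ℝ} (hu : u ∈ rf.F) (hv : v ∈ rf.F) :
    (rf.E u v) ^ 2 ≤ rf.E u u * rf.E v v := by
  have key : ∀ t : ℝ, 0 ≤ rf.E u u + 2 * (t * rf.E u v) + t ^ 2 * rf.E v v := by
    intro t
    have h0 := rf.nonneg _ (rf.add_mem hu (rf.smul_mem t hv))
    rwa [RF.E_expand rf hu (rf.smul_mem t hv), RF.E_smul_right rf t hu hv,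
      RF.E_smul_expand rf t hv] at h0
  have h := RF.quad_aux (rf.E v v) (rf.E u v) (rf.E u u) (rf.nonneg v hv)
    (rf.nonneg u hu) key
  linarith [h]

lemma RF.E_const_right (c : ℝ) {u : X → ℝ} (hu : u ∈ rf.F) :
    rf.E u (fun _ => c) = 0 := by
  have hc : rf.E (fun _ => c) (fun _ => c) = 0 :=
    (rf.null_iff_const _ (rf.const_mem c)).mpr ⟨c, fun _ => rfl⟩
  have h := RF.E_cs rf hu (rf.const_mem c)
  rw [hc, mul_zero] at h
  nlinarith [sq_nonneg (rf.E u (fun _ => c))]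

lemma RF.E_add_const (c : ℝ) {u : X → ℝ} (hu : u ∈ rf.F) :
    rf.E (u + fun _ => c) (u + fun _ => c) = rf.E u u := by
  rw [RF.E_expand rf hu (rf.const_mem c), RF.E_const_right rf c hu,
    (rf.null_iff_const _ (rf.const_mem c)).mpr ⟨c, fun _ => rfl⟩]
  ring

lemma RF.E_mul_le {u v : X → ℝ} (hu : u ∈ rf.F) (hv : v ∈ rf.F) :
    rf.E u v ≤ Real.sqrt (rf.E u u) * Real.sqrt (rf.E v v) := by
  have h := RF.E_cs rf hu hv
  have h1 : rf.E u v ≤ |rf.E u v| := le_abs_self _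
  have h2 : |rf.E u v| = Real.sqrt ((rf.E u v) ^ 2) := (Real.sqrt_sq_eq_abs _).symm
  have h3 : Real.sqrt ((rf.E u v) ^ 2) ≤ Real.sqrt (rf.E u u * rf.E v v) :=
    Real.sqrt_le_sqrt h
  rw [Real.sqrt_mul (rf.nonneg u hu)] at h3
  linarith

lemma RF.sqrtE_add_le {u v : X → ℝ} (hu : u ∈ rf.F) (hv : v ∈ rf.F) :
    Real.sqrt (rf.E (u + v) (u + v)) ≤ Real.sqrt (rf.E u u) + Real.sqrt (rf.E v v) := by
  have h1 := RF.E_mul_le rf hu hv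
  have ha := Real.sq_sqrt (rf.nonneg u hu)
  have hb := Real.sq_sqrt (rf.nonneg v hv)
  have h2 : rf.E (u + v) (u + v) ≤ (Real.sqrt (rf.E u u) + Real.sqrt (rf.E v v)) ^ 2 := by
    rw [RF.E_expand rf hu hv]; nlinarith
  calc Real.sqrt (rf.E (u + v) (u + v))
      ≤ Real.sqrt ((Real.sqrt (rf.E u u) + Real.sqrt (rf.E v v)) ^ 2) := Real.sqrt_le_sqrt h2
    _ = Real.sqrt (rf.E u u) + Real.sqrt (rf.E v v) := Real.sqrt_sq
        (by positivity)

end Basic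
section Res

variable {X : Type*} [MetricSpace X] (rf : ResistanceForm X)

lemma RF.res_est (hR : ∀ x y : X, dist x y = rf.rmetric x y)
    {u : X → ℝ} (hu : u ∈ rf.F) (x y : X) :
    (u x - u y) ^ 2 ≤ dist x y * rf.E u u := by
  rcases eq_or_ne (u x) (u y) with h | h
  · rw [h, sub_self]
    simpa using mul_nonneg dist_nonneg (rf.nonneg u hu)
  have hxy : x ≠ y := by rintro rfl; exact h rfl
  set c : ℝ := u x - u y with hc
  have hc0 : c ≠ 0 := sub_ne_zero.mpr h
  have hE : 0 < rf.E u u := by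
    rcases (rf.nonneg u hu).eq_or_lt with h0 | h0
    · exfalso
      obtain ⟨d, hd⟩ := (rf.null_iff_const u hu).mp h0.symm
      exact h (by rw [hd x, hd y])
    · exact h0
  set w : X → ℝ := u + fun _ => -u y with hw
  have hwF : w ∈ rf.F := rf.add_mem hu (rf.const_mem _)
  have hww : rf.E w w = rf.E u u := RF.E_add_const rf _ hu
  set v : X → ℝ := c⁻¹ • w with hv
  have hvF : v ∈ rf.F := rf.smul_mem _ hwF
  have hvx : v x = 1 := by
    simp only [hv, hw, Pi.smul_apply, Pi.add_apply, smul_eq_mul]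
    rw [hc]
    field_simp
    ring
  have hvy : v y = 0 := by
    simp only [hv, hw, Pi.smul_apply, Pi.add_apply, smul_eq_mul]
    ring
  have hvv : rf.E v v = (c⁻¹) ^ 2 * rf.E u u := by
    rw [hv, RF.E_smul_expand rf _ hwF, hww]
  set Sset := {e : ℝ | ∃ u' ∈ rf.F, u' x = 1 ∧ u' y = 0 ∧ rf.E u' u' = e} with hSset
  have hmem : rf.E v v ∈ Sset := ⟨v, hvF, hvx, hvy, rfl⟩
  have hbdd : BddBelow Sset := by
    refine ⟨0, ?_⟩
    rintro e ⟨u', hu', -, -, rfl⟩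
    exact rf.nonneg u' hu'
  have hinf_le : sInf Sset ≤ (c⁻¹) ^ 2 * rf.E u u := hvv ▸ csInf_le hbdd hmem
  have hpos : 0 < sInf Sset := rf.inf_pos x y hxy
  have hdist : dist x y = (sInf Sset)⁻¹ := by
    rw [hR x y, ResistanceForm.rmetric, if_neg hxy]
  have hval_pos : 0 < (c⁻¹) ^ 2 * rf.E u u := by positivity
  have hinv : ((c⁻¹) ^ 2 * rf.E u u)⁻¹ ≤ (sInf Sset)⁻¹ :=
    inv_anti₀ hpos hinf_le
  have heq : ((c⁻¹) ^ 2 * rf.E u u)⁻¹ = c ^ 2 / rf.E u u := by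
    field_simp
  rw [hdist]
  rw [heq] at hinv
  have := (div_le_iff₀ hE).mp hinv
  calc c ^ 2 ≤ (sInf Sset)⁻¹ * rf.E u u := this
    _ = (sInf Sset)⁻¹ * rf.E u u := rfl

end Res
section Dy

/-- Dyadic convex hull of the tail `{u n : n ≥ N}`. -/
inductive DyHull {X : Type*} (u : ℕ → X → ℝ) (N : ℕ) : (X → ℝ) → Prop
  | base (n : ℕ) (hn : N ≤ n) : DyHull u N (u n)
  | mid (a b : X → ℝ) (ha : DyHull u N a) (hb : DyHull u N b) :
      DyHull u N ((1 / 2 : ℝ) • (a + b))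

variable {X : Type*} (rf : ResistanceForm X) {u : ℕ → X → ℝ}

lemma DyHull.memF (hu : ∀ n, u n ∈ rf.F) {N : ℕ} {w : X → ℝ} (hw : DyHull u N w) :
    w ∈ rf.F := by
  induction hw with
  | base n hn => exact hu n
  | mid a b ha hb iha ihb => exact rf.smul_mem _ (rf.add_mem iha ihb)

lemma DyHull.mono {M N : ℕ} (hMN : M ≤ N) {w : X → ℝ} (hw : DyHull u N w) :
    DyHull u M w := by
  induction hw with
  | base n hn => exact .base n (hMN.trans hn)
  | mid a b ha hb iha ihb => exact .mid a b iha ihb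

lemma DyHull.energy_le (hu : ∀ n, u n ∈ rf.F) {S : ℝ}
    (hS : ∀ n, rf.E (u n) (u n) ≤ S) {N : ℕ} {w : X → ℝ} (hw : DyHull u N w) :
    rf.E w w ≤ S := by
  induction hw with
  | base n hn => exact hS n
  | mid a b ha hb iha ihb =>
    have haF := DyHull.memF rf hu ha
    have hbF := DyHull.memF rf hu hb
    have hcs := RF.E_cs rf haF hbF
    have h0a := rf.nonneg a haF
    have h0b := rf.nonneg b hbF
    rw [RF.E_smul_expand rf _ (rf.add_mem haF hbF), RF.E_expand rf haF hbF]
    nlinarith [sq_nonneg (rf.E a a - rf.E b b), sq_nonneg (rf.E a a + rf.E b b)]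

lemma DyHull.pointwise_bound {N : ℕ} {w : X → ℝ} (hw : DyHull u N w)
    (x : X) (L b : ℝ) (hb : ∀ n, N ≤ n → |u n x - L| ≤ b) : |w x - L| ≤ b := by
  induction hw with
  | base n hn => exact hb n hn
  | mid a c ha hc iha ihc =>
    have h1 := abs_le.mp iha
    have h2 := abs_le.mp ihc
    simp only [Pi.smul_apply, Pi.add_apply, smul_eq_mul]
    rw [abs_le]
    constructor <;> [linarith [h1.1, h2.1]; linarith [h1.2, h2.2]]

lemma RF.E_half_diff {a b : X → ℝ} (ha : a ∈ rf.F) (hb : b ∈ rf.F) :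
    rf.E (a - b) (a - b)
      = 2 * rf.E a a + 2 * rf.E b b
        - 4 * rf.E ((1 / 2 : ℝ) • (a + b)) ((1 / 2 : ℝ) • (a + b)) := by
  rw [RF.E_sub_expand rf ha hb, RF.E_smul_expand rf _ (rf.add_mem ha hb),
    RF.E_expand rf ha hb]
  ring

end Dy
section Master

variable {X : Type*} [MetricSpace X] (rf : ResistanceForm X)

/-- Master closedness lemma: a pointwise limit of functions in `F` with uniformly
bounded energies belongs to `F`, with energy at most the bound. -/
lemma RF.master (hR : ∀ x y : X, dist x y = rf.rmetric x y) (x₀ : X)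
    (u : ℕ → X → ℝ) (hu : ∀ n, u n ∈ rf.F) (S : ℝ)
    (hS : ∀ n, rf.E (u n) (u n) ≤ S) (φ : X → ℝ)
    (hpt : ∀ x, Filter.Tendsto (fun n => u n x) Filter.atTop (nhds (φ x))) :
    φ ∈ rf.F ∧ rf.E φ φ ≤ S := by
  classical
  have hS0 : 0 ≤ S := (rf.nonneg (u 0) (hu 0)).trans (hS 0)
  set Eset : ℕ → Set ℝ := fun N => {e | ∃ w, DyHull u N w ∧ rf.E w w = e} with hEset
  have hne : ∀ N, (Eset N).Nonempty := fun N => ⟨_, u N, .base N le_rfl, rfl⟩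
  have hbdd : ∀ N, BddBelow (Eset N) := by
    intro N
    refine ⟨0, ?_⟩
    rintro e ⟨w, hw, rfl⟩
    exact rf.nonneg w (hw.memF rf hu)
  set d : ℕ → ℝ := fun N => sInf (Eset N) with hd
  have hdle : ∀ N {w}, DyHull u N w → d N ≤ rf.E w w :=
    fun N w hw => csInf_le (hbdd N) ⟨w, hw, rfl⟩
  have hdS : ∀ N, d N ≤ S := fun N => (hdle N (.base N le_rfl)).trans (hS N)
  have hd0 : ∀ N, 0 ≤ d N := by
    intro N
    apply le_csInf (hne N)
    rintro e ⟨w, hw, rfl⟩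
    exact rf.nonneg w (hw.memF rf hu)
  have hdmono : Monotone d := by
    intro M N hMN
    apply le_csInf (hne N)
    rintro e ⟨w, hw, rfl⟩
    exact hdle M (hw.mono hMN)
  have hdbdd : BddAbove (Set.range d) := ⟨S, by rintro e ⟨N, rfl⟩; exact hdS N⟩
  set D : ℝ := ⨆ N, d N with hD
  have hdleD : ∀ N, d N ≤ D := fun N => le_ciSup hdbdd N
  -- choose近 minimizers
  have hex : ∀ N : ℕ, ∃ w, DyHull u N w ∧ rf.E w w < d N + 1 / (N + 1) := by
    intro N
    have hlt : d N < d N + 1 / (N + 1) := by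
      have : (0 : ℝ) < 1 / (N + 1) := by positivity
      linarith
    obtain ⟨e, ⟨w, hw, rfl⟩, he⟩ := exists_lt_of_csInf_lt (hne N) hlt
    exact ⟨w, hw, he⟩
  choose W hW hWe using hex
  have hWF : ∀ N, W N ∈ rf.F := fun N => (hW N).memF rf hu
  have hWS : ∀ N, rf.E (W N) (W N) ≤ S := fun N => (hW N).energy_le rf hu hS
  -- Cauchy
  have hcauchy : ∀ ε : ℝ, 0 < ε → ∃ K : ℕ, ∀ m ≥ K, ∀ n ≥ K,
      rf.E (W m - W n) (W m - W n) < ε := by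
    intro ε hε
    obtain ⟨K₁, hK₁⟩ : ∃ K₁, D - ε / 16 < d K₁ := by
      have : D - ε / 16 < D := by linarith
      exact exists_lt_of_lt_ciSup this
    obtain ⟨K₂, hK₂⟩ : ∃ K₂ : ℕ, 1 / ((K₂ : ℝ) + 1) < ε / 16 := by
      obtain ⟨n, hn⟩ := exists_nat_one_div_lt (show (0:ℝ) < ε / 16 by linarith)
      exact ⟨n, hn⟩
    refine ⟨max K₁ K₂, fun m hm n hn => ?_⟩
    have hmK₁ : K₁ ≤ m := (le_max_left _ _).trans hm
    have hnK₁ : K₁ ≤ n := (le_max_left _ _).trans hn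
    have hmK₂ : K₂ ≤ m := (le_max_right _ _).trans hm
    have hnK₂ : K₂ ≤ n := (le_max_right _ _).trans hn
    have hmid : DyHull u K₁ ((1 / 2 : ℝ) • (W m + W n)) :=
      .mid _ _ ((hW m).mono hmK₁) ((hW n).mono hnK₁)
    have h1 : d K₁ ≤ rf.E ((1 / 2 : ℝ) • (W m + W n)) ((1 / 2 : ℝ) • (W m + W n)) :=
      hdle K₁ hmid
    have h2 : rf.E (W m) (W m) < d m + 1 / ((m : ℝ) + 1) := hWe m
    have h3 : rf.E (W n) (W n) < d n + 1 / ((n : ℝ) + 1) := hWe n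
    have h4 : 1 / ((m : ℝ) + 1) ≤ 1 / ((K₂ : ℝ) + 1) := by
      apply one_div_le_one_div_of_le (by positivity)
      exact_mod_cast by omega
    have h5 : 1 / ((n : ℝ) + 1) ≤ 1 / ((K₂ : ℝ) + 1) := by
      apply one_div_le_one_div_of_le (by positivity)
      exact_mod_cast by omega
    rw [RF.E_half_diff rf (hWF m) (hWF n)]
    have hdm := hdleD m
    have hdn := hdleD n
    linarith
  obtain ⟨v, hvF, hvconv⟩ := rf.complete W hWF hcauchy
  -- pointwise convergence of W
  have hWpt : ∀ x, Filter.Tendsto (fun N => W N x) Filter.atTop (nhds (φ x)) := by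
    intro x
    rw [Metric.tendsto_atTop]
    intro ε hε
    obtain ⟨K, hK⟩ := (Metric.tendsto_atTop.mp (hpt x)) (ε / 2) (by linarith)
    refine ⟨K, fun N hN => ?_⟩
    have hb : ∀ n, N ≤ n → |u n x - φ x| ≤ ε / 2 := by
      intro n hn
      have := hK n (hN.trans hn)
      rw [Real.dist_eq] at this
      linarith
    have := (hW N).pointwise_bound x (φ x) (ε / 2) hb
    rw [Real.dist_eq]
    linarith
  -- identification of v with φ up to a constant
  have hkey : ∀ x : X, v x - v x₀ = φ x - φ x₀ := by
    intro x
    have hA : Filter.Tendsto (fun N => W N x - W N x₀) Filter.atTop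
        (nhds (φ x - φ x₀)) := (hWpt x).sub (hWpt x₀)
    have hB : Filter.Tendsto (fun N => W N x - W N x₀) Filter.atTop
        (nhds (v x - v x₀)) := by
      rw [Metric.tendsto_atTop]
      intro ε hε
      have hεd : 0 < ε ^ 2 / (dist x x₀ + 1) := by positivity
      obtain ⟨K, hK⟩ := hvconv _ hεd
      refine ⟨K, fun N hN => ?_⟩
      have hEvw := hK N hN
      have hvwF : v - W N ∈ rf.F := RF.sub_mem rf hvF (hWF N)
      have hres := RF.res_est rf hR hvwF x x₀
      have hd1 : dist x x₀ * rf.E (v - W N) (v - W N) < ε ^ 2 := by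
        have h0 : 0 ≤ rf.E (v - W N) (v - W N) := rf.nonneg _ hvwF
        have hbig : dist x x₀ * rf.E (v - W N) (v - W N)
            ≤ (dist x x₀ + 1) * rf.E (v - W N) (v - W N) := by nlinarith [dist_nonneg (x := x) (y := x₀)]
        have : (dist x x₀ + 1) * rf.E (v - W N) (v - W N)
            < (dist x x₀ + 1) * (ε ^ 2 / (dist x x₀ + 1)) := by
          apply mul_lt_mul_of_pos_left hEvw
          nlinarith [dist_nonneg (x := x) (y := x₀)]
        have heq : (dist x x₀ + 1) * (ε ^ 2 / (dist x x₀ + 1)) = ε ^ 2 := by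
          field_simp
        nlinarith
      have hval : ((v - W N) x - (v - W N) x₀) ^ 2 < ε ^ 2 := lt_of_le_of_lt hres hd1
      have hsimp : (v - W N) x - (v - W N) x₀ = (v x - v x₀) - (W N x - W N x₀) := by
        simp [Pi.sub_apply]; ring
      rw [hsimp] at hval
      rw [Real.dist_eq, abs_sub_comm]
      nlinarith [abs_nonneg ((v x - v x₀) - (W N x - W N x₀)),
        sq_abs ((v x - v x₀) - (W N x - W N x₀))]
    exact (tendsto_nhds_unique hB hA)
  have hφeq : φ = v + fun _ => φ x₀ - v x₀ := by
    funext x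
    have := hkey x
    simp only [Pi.add_apply]
    linarith
  have hφF : φ ∈ rf.F := hφeq ▸ rf.add_mem hvF (rf.const_mem _)
  have hEφ : rf.E φ φ = rf.E v v := by rw [hφeq, RF.E_add_const rf _ hvF]
  refine ⟨hφF, ?_⟩
  rw [hEφ]
  -- energy bound
  have hfinal : ∀ ε : ℝ, 0 < ε → Real.sqrt (rf.E v v) ≤ Real.sqrt S + ε := by
    intro ε hε
    obtain ⟨K, hK⟩ := hvconv (ε ^ 2) (by positivity)
    have hEvw := hK K le_rfl
    have hvwF : v - W K ∈ rf.F := RF.sub_mem rf hvF (hWF K)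
    have hdecomp : W K + (v - W K) = v := by abel
    have htri := RF.sqrtE_add_le rf (hWF K) hvwF
    rw [hdecomp] at htri
    have h1 : Real.sqrt (rf.E (W K) (W K)) ≤ Real.sqrt S := Real.sqrt_le_sqrt (hWS K)
    have h2 : Real.sqrt (rf.E (v - W K) (v - W K)) ≤ ε := by
      have := Real.sqrt_le_sqrt hEvw.le
      rwa [Real.sqrt_sq hε.le] at this
    linarith
  have hsle : Real.sqrt (rf.E v v) ≤ Real.sqrt S := le_of_forall_pos_le_add hfinal
  have := mul_self_le_mul_self (Real.sqrt_nonneg _) hsle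
  rwa [Real.mul_self_sqrt (rf.nonneg v hvF), Real.mul_self_sqrt hS0] at this

end Master
section Pos

variable {X : Type*} [MetricSpace X] (rf : ResistanceForm X)

lemma RF.posPart (hR : ∀ x y : X, dist x y = rf.rmetric x y) (x₀ : X)
    {u : X → ℝ} (hu : u ∈ rf.F) :
    (fun x => max 0 (u x)) ∈ rf.F ∧
      rf.E (fun x => max 0 (u x)) (fun x => max 0 (u x)) ≤ rf.E u u := by
  set v : ℕ → X → ℝ := fun n =>
    ((n : ℝ) + 1) • (fun x => max 0 (min 1 (((((n : ℝ) + 1)⁻¹) • u) x))) with hv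
  have hc : ∀ n : ℕ, (0 : ℝ) < (n : ℝ) + 1 := fun n => by positivity
  have hinner : ∀ n : ℕ, (((n : ℝ) + 1)⁻¹) • u ∈ rf.F := fun n => rf.smul_mem _ hu
  have hvF : ∀ n, v n ∈ rf.F := fun n =>
    rf.smul_mem _ (rf.markov _ (hinner n)).1
  have hvE : ∀ n, rf.E (v n) (v n) ≤ rf.E u u := by
    intro n
    have h1 := (rf.markov _ (hinner n)).2
    rw [RF.E_smul_expand rf _ hu] at h1
    have hne : ((n : ℝ) + 1) ≠ 0 := (hc n).ne'
    calc rf.E (v n) (v n)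
        = ((n : ℝ) + 1) ^ 2 *
          rf.E (fun x => max 0 (min 1 (((((n : ℝ) + 1)⁻¹) • u) x)))
            (fun x => max 0 (min 1 (((((n : ℝ) + 1)⁻¹) • u) x))) :=
          RF.E_smul_expand rf _ (rf.markov _ (hinner n)).1
      _ ≤ ((n : ℝ) + 1) ^ 2 * ((((n : ℝ) + 1)⁻¹) ^ 2 * rf.E u u) :=
          mul_le_mul_of_nonneg_left h1 (sq_nonneg _)
      _ = rf.E u u := by field_simp
  have hvpt : ∀ x, Filter.Tendsto (fun n => v n x) Filter.atTop
      (nhds (max 0 (u x))) := by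
    intro x
    have hev : ∀ n : ℕ, u x ≤ (n : ℝ) + 1 → v n x = max 0 (u x) := by
      intro n hn
      have hne : ((n : ℝ) + 1) ≠ 0 := (hc n).ne'
      simp only [hv, Pi.smul_apply, smul_eq_mul]
      rw [mul_max_of_nonneg _ _ (hc n).le, mul_zero, mul_min_of_nonneg _ _ (hc n).le,
        mul_one, mul_inv_cancel_left₀ hne, min_eq_right hn]
    have hEE : (fun n : ℕ => v n x) =ᶠ[Filter.atTop] (fun _ => max 0 (u x)) := by
      rw [Filter.EventuallyEq, Filter.eventually_atTop]
      refine ⟨⌈u x⌉₊, fun n hn => hev n ?_⟩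
      calc u x ≤ (⌈u x⌉₊ : ℝ) := Nat.le_ceil _
        _ ≤ (n : ℝ) := by exact_mod_cast hn
        _ ≤ (n : ℝ) + 1 := by linarith
    exact Filter.Tendsto.congr' hEE.symm tendsto_const_nhds
  exact RF.master rf hR x₀ v hvF (rf.E u u) hvE _ hvpt

lemma RF.cross (hR : ∀ x y : X, dist x y = rf.rmetric x y) (x₀ : X)
    {u : X → ℝ} (hu : u ∈ rf.F) :
    rf.E (fun x => max 0 (u x)) (fun x => max 0 (-u x)) ≤ 0 := by
  set p : X → ℝ := fun x => max 0 (u x) with hp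
  set q : X → ℝ := fun x => max 0 (-u x) with hq
  have hnegu : -u ∈ rf.F := by
    have := rf.smul_mem (-1) hu
    rwa [neg_one_smul] at this
  have hpF : p ∈ rf.F := (RF.posPart rf hR x₀ hu).1
  have hqF : q ∈ rf.F := (RF.posPart rf hR x₀ hnegu).1
  have hqq0 := rf.nonneg q hqF
  have hstep : ∀ s : ℝ, 0 < s → rf.E p q ≤ s * rf.E q q / 2 := by
    intro s hs
    have hwF : p - s • q ∈ rf.F := RF.sub_mem rf hpF (rf.smul_mem s hqF)
    have hkey : p = fun x => max 0 ((p - s • q) x) := by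
      funext x
      simp only [Pi.sub_apply, Pi.smul_apply, smul_eq_mul, hp, hq]
      rcases le_or_gt (u x) 0 with h | h
      · have h1 : max 0 (u x) = 0 := max_eq_left h
        rw [h1, zero_sub]
        refine (max_eq_left ?_).symm
        have h2 : (0:ℝ) ≤ max 0 (-u x) := le_max_left _ _
        nlinarith
      · have h2 : max 0 (-u x) = 0 := max_eq_left (by linarith)
        rw [h2, mul_zero, sub_zero, max_eq_right (le_max_left 0 (u x))]
    have hEp := (RF.posPart rf hR x₀ hwF).2
    rw [← hkey] at hEp
    have hexp : rf.E (p - s • q) (p - s • q)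
        = rf.E p p - 2 * (s * rf.E p q) + s ^ 2 * rf.E q q := by
      rw [RF.E_sub_expand rf hpF (rf.smul_mem s hqF), RF.E_smul_right rf s hpF hqF,
        RF.E_smul_expand rf s hqF]
    rw [hexp] at hEp
    nlinarith
  by_contra hcon
  push_neg at hcon
  rcases hqq0.eq_or_lt with h0 | h0
  · have := hstep 1 one_pos
    rw [← h0] at this
    nlinarith
  · have := hstep (rf.E p q / rf.E q q) (by positivity)
    have hne : rf.E q q ≠ 0 := h0.ne'
    rw [div_mul_cancel₀ _ hne] at this
    nlinarith

lemma RF.max_lemma (hR : ∀ x y : X, dist x y = rf.rmetric x y) (x₀ : X)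
    {u v : X → ℝ} (hu : u ∈ rf.F) (hv : v ∈ rf.F) :
    (fun x => max (u x) (v x)) ∈ rf.F ∧
      rf.E (fun x => max (u x) (v x)) (fun x => max (u x) (v x))
        ≤ rf.E u u + rf.E v v := by
  set w : X → ℝ := u - v with hw
  have hwF : w ∈ rf.F := RF.sub_mem rf hu hv
  set p : X → ℝ := fun x => max 0 (w x) with hp
  set q : X → ℝ := fun x => max 0 (-w x) with hq
  obtain ⟨hpF, hpE⟩ := RF.posPart rf hR x₀ hwF
  have hnegw : -w ∈ rf.F := by
    have := rf.smul_mem (-1) hwF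
    rwa [neg_one_smul] at this
  have hqF : q ∈ rf.F := (RF.posPart rf hR x₀ hnegw).1
  have hpq : rf.E p q ≤ 0 := RF.cross rf hR x₀ hwF
  -- max = v + p
  have hmax : (fun x => max (u x) (v x)) = v + p := by
    funext x
    simp only [Pi.add_apply, hp, hw, Pi.sub_apply]
    rcases le_total (u x) (v x) with h | h
    · rw [max_eq_right h, max_eq_left (by linarith)]; ring
    · rw [max_eq_left h, max_eq_right (by linarith)]; ring
  have hmaxF : (fun x => max (u x) (v x)) ∈ rf.F := hmax ▸ rf.add_mem hv hpF
  refine ⟨hmaxF, ?_⟩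
  -- w = p - q
  have hwpq : w = p - q := by
    funext x
    simp only [Pi.sub_apply, hp, hq]
    rcases le_total (w x) 0 with h | h
    · rw [max_eq_left h, max_eq_right (by linarith)]; ring
    · rw [max_eq_right h, max_eq_left (by linarith)]; ring
  -- u = v + w
  have huvw : u = v + w := by rw [hw]; abel
  have hEu : rf.E u u = rf.E v v + 2 * rf.E v w + rf.E w w := by
    have h := RF.E_expand rf hv hwF
    rwa [← huvw] at h
  have hEvw : rf.E v w = rf.E v p - rf.E v q := by
    rw [hwpq]
    have : p - q = p + (-1 : ℝ) • q := by rw [neg_one_smul, ← sub_eq_add_neg]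
    rw [this, RF.E_add_right rf hv hpF (rf.smul_mem _ hqF), RF.E_smul_right rf _ hv hqF]
    ring
  have hEw : rf.E w w = rf.E p p - 2 * rf.E p q + rf.E q q := by
    rw [hwpq]; exact RF.E_sub_expand rf hpF hqF
  have hEmax : rf.E (fun x => max (u x) (v x)) (fun x => max (u x) (v x))
      = rf.E v v + 2 * rf.E v p + rf.E p p := by
    rw [hmax]; exact RF.E_expand rf hv hpF
  have hvq : 0 ≤ rf.E (v - q) (v - q) := rf.nonneg _ (RF.sub_mem rf hv hqF)
  rw [RF.E_sub_expand rf hv hqF] at hvq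
  rw [hEmax, hEu, hEvw, hEw]
  linarith

end Pos
section Sup

/-- Pointwise max of `f 0, ..., f N`. -/
def RFpmax {X : Type*} (f : ℕ → X → ℝ) : ℕ → X → ℝ
  | 0 => f 0
  | (N + 1) => fun x => max (RFpmax f N x) (f (N + 1) x)

variable {X : Type*} [MetricSpace X] (rf : ResistanceForm X)

lemma RFpmax_le {f : ℕ → X → ℝ} {x : X} {b : ℝ} (hb : ∀ n, f n x ≤ b) :
    ∀ N, RFpmax f N x ≤ b := by
  intro N
  induction N with
  | zero => exact hb 0
  | succ N ih => exact max_le ih (hb (N + 1))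

lemma le_RFpmax {f : ℕ → X → ℝ} {x : X} : ∀ n, f n x ≤ RFpmax f n x := by
  intro n
  cases n with
  | zero => exact le_rfl
  | succ N => exact le_max_right _ _

lemma RFpmax_mono {f : ℕ → X → ℝ} {x : X} : Monotone (fun N => RFpmax f N x) := by
  apply monotone_nat_of_le_succ
  intro N
  exact le_max_left _ _

lemma RFpmax_spec (hR : ∀ x y : X, dist x y = rf.rmetric x y) (x₀ : X)
    {f : ℕ → X → ℝ} (hf : ∀ n, f n ∈ rf.F) :
    ∀ N, RFpmax f N ∈ rf.F ∧
      rf.E (RFpmax f N) (RFpmax f N) ≤ ∑ n ∈ Finset.range (N + 1), rf.E (f n) (f n) := by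
  intro N
  induction N with
  | zero => exact ⟨hf 0, by simp [RFpmax]⟩
  | succ N ih =>
    obtain ⟨ihF, ihE⟩ := ih
    obtain ⟨hF, hE⟩ := RF.max_lemma rf hR x₀ ihF (hf (N + 1))
    have heq : (fun x => max (RFpmax f N x) (f (N + 1) x)) = RFpmax f (N + 1) := rfl
    constructor
    · rw [← heq]; exact hF
    · rw [← heq]
      calc rf.E (fun x => max (RFpmax f N x) (f (N + 1) x))
            (fun x => max (RFpmax f N x) (f (N + 1) x))
          ≤ rf.E (RFpmax f N) (RFpmax f N) + rf.E (f (N + 1)) (f (N + 1)) := hE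
        _ ≤ ∑ n ∈ Finset.range (N + 1), rf.E (f n) (f n) + rf.E (f (N + 1)) (f (N + 1)) := by
            linarith
        _ = ∑ n ∈ Finset.range (N + 2), rf.E (f n) (f n) := (Finset.sum_range_succ _ _).symm

/-- The "sup half" of the main theorem. -/
lemma RF.sup_half (hR : ∀ x y : X, dist x y = rf.rmetric x y)
    (f : ℕ → X → ℝ) (hf : ∀ n, f n ∈ rf.F)
    (hsum : Summable fun n => rf.E (f n) (f n))
    (x₀ : X) (hb : BddAbove (Set.range fun n => f n x₀)) :
    (∀ x : X, BddAbove (Set.range fun n => f n x)) ∧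
      (fun x => ⨆ n, f n x) ∈ rf.F ∧
      rf.E (fun x => ⨆ n, f n x) (fun x => ⨆ n, f n x) ≤ ∑' n, rf.E (f n) (f n) := by
  set S : ℝ := ∑' n, rf.E (f n) (f n) with hS
  have hterm : ∀ n, rf.E (f n) (f n) ≤ S :=
    fun n => Summable.le_tsum hsum n (fun j _ => rf.nonneg (f j) (hf j))
  have hS0 : 0 ≤ S := tsum_nonneg (fun n => rf.nonneg (f n) (hf n))
  obtain ⟨b₀, hb₀⟩ := hb
  have hub : ∀ x n, f n x ≤ b₀ + Real.sqrt (dist x x₀ * S) := by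
    intro x n
    have hres := RF.res_est rf hR (hf n) x x₀
    have h1 : (f n x - f n x₀) ^ 2 ≤ dist x x₀ * S := by
      calc (f n x - f n x₀) ^ 2 ≤ dist x x₀ * rf.E (f n) (f n) := hres
        _ ≤ dist x x₀ * S := by
            have := dist_nonneg (x := x) (y := x₀)
            nlinarith [hterm n]
    have h2 : |f n x - f n x₀| ≤ Real.sqrt (dist x x₀ * S) := by
      have := Real.sqrt_le_sqrt h1
      rwa [Real.sqrt_sq_eq_abs] at this
    have h3 : f n x₀ ≤ b₀ := hb₀ ⟨n, rfl⟩
    have h4 := abs_le.mp h2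
    linarith [h4.2]
  have hball : ∀ x : X, BddAbove (Set.range fun n => f n x) := by
    intro x
    exact ⟨b₀ + Real.sqrt (dist x x₀ * S), by rintro y ⟨n, rfl⟩; exact hub x n⟩
  refine ⟨hball, ?_⟩
  have hpm : ∀ N, RFpmax f N ∈ rf.F ∧
      rf.E (RFpmax f N) (RFpmax f N) ≤ ∑ n ∈ Finset.range (N + 1), rf.E (f n) (f n) :=
    RFpmax_spec rf hR x₀ hf
  have hpmS : ∀ N, rf.E (RFpmax f N) (RFpmax f N) ≤ S := by
    intro N
    refine (hpm N).2.trans ?_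
    exact Summable.sum_le_tsum _ (fun n _ => rf.nonneg (f n) (hf n)) hsum
  have hbddp : ∀ x, BddAbove (Set.range fun N => RFpmax f N x) := by
    intro x
    refine ⟨b₀ + Real.sqrt (dist x x₀ * S), ?_⟩
    rintro y ⟨N, rfl⟩
    exact RFpmax_le (fun n => hub x n) N
  have htend : ∀ x, Filter.Tendsto (fun N => RFpmax f N x) Filter.atTop
      (nhds (⨆ n, f n x)) := by
    intro x
    have h1 : Filter.Tendsto (fun N => RFpmax f N x) Filter.atTop
        (nhds (⨆ N, RFpmax f N x)) := tendsto_atTop_ciSup RFpmax_mono (hbddp x)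
    have h2 : (⨆ N, RFpmax f N x) = ⨆ n, f n x := by
      apply le_antisymm
      · apply ciSup_le
        intro N
        apply RFpmax_le
        intro n
        exact le_ciSup (hball x) n
      · apply ciSup_le
        intro n
        exact (le_RFpmax n).trans (le_ciSup (hbddp x) n)
    rwa [h2] at h1
  exact (RF.master rf hR x₀ (RFpmax f) (fun N => (hpm N).1) S hpmS _ htend)

end Sup
/-- Let `(E,F)` be a resistance form whose resistance metric `R` is
complete, doubling and uniformly perfect, and let `{f_n} ⊆ F` with `∑ E(f_n,f_n) < ∞`.
(1) If `sup_n f_n(x*) < ∞` for some `x*`, then `f̄ = sup_n f_n` is finite everywhere,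
belongs to `F`, and `E(f̄,f̄) ≤ ∑ E(f_n,f_n)`.
(2) Dually for the pointwise infimum. -/
theorem sup_inf_mem_of_summable_energy {X : Type*} [MetricSpace X] [CompleteSpace X]
    (rf : ResistanceForm X) (hR : ∀ x y : X, dist x y = rf.rmetric x y)
    (hdb : DoublingOf fun x y : X => dist x y)
    (hup : UniformlyPerfectOf fun x y : X => dist x y)
    (f : ℕ → X → ℝ) (hf : ∀ n, f n ∈ rf.F)
    (hsum : Summable fun n => rf.E (f n) (f n)) :
    ((∃ x₀ : X, BddAbove (Set.range fun n => f n x₀)) →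
      (∀ x : X, BddAbove (Set.range fun n => f n x)) ∧
      (fun x => ⨆ n, f n x) ∈ rf.F ∧
      rf.E (fun x => ⨆ n, f n x) (fun x => ⨆ n, f n x) ≤ ∑' n, rf.E (f n) (f n)) ∧
    ((∃ x₀ : X, BddBelow (Set.range fun n => f n x₀)) →
      (∀ x : X, BddBelow (Set.range fun n => f n x)) ∧
      (fun x => ⨅ n, f n x) ∈ rf.F ∧
      rf.E (fun x => ⨅ n, f n x) (fun x => ⨅ n, f n x) ≤ ∑' n, rf.E (f n) (f n)) := by
  constructor
  · rintro ⟨x₀, hx₀⟩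
    exact RF.sup_half rf hR f hf hsum x₀ hx₀
  · rintro ⟨x₀, hx₀⟩
    -- dual: apply the sup half to `g n = -(f n)`
    set g : ℕ → X → ℝ := fun n => (-1 : ℝ) • f n with hg
    have hgf : ∀ n, g n ∈ rf.F := fun n => rf.smul_mem _ (hf n)
    have hgx : ∀ n x, g n x = -(f n x) := by
      intro n x; simp [hg]
    have hEg : ∀ n, rf.E (g n) (g n) = rf.E (f n) (f n) := by
      intro n
      rw [hg]
      rw [RF.E_smul_expand rf (-1) (hf n)]
      ring
    have hsumg : Summable fun n => rf.E (g n) (g n) := by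
      have : (fun n => rf.E (g n) (g n)) = fun n => rf.E (f n) (f n) := funext hEg
      rw [this]; exact hsum
    have hbg : BddAbove (Set.range fun n => g n x₀) := by
      obtain ⟨b, hbl⟩ := hx₀
      refine ⟨-b, ?_⟩
      rintro y ⟨n, rfl⟩
      have h1 : b ≤ f n x₀ := hbl ⟨n, rfl⟩
      have h2 := hgx n x₀
      show g n x₀ ≤ -b
      linarith
    obtain ⟨hball, hmem, hE⟩ := RF.sup_half rf hR g hgf hsumg x₀ hbg
    have hBB : ∀ x : X, BddBelow (Set.range fun n => f n x) := by
      intro x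
      obtain ⟨c, hc⟩ := hball x
      refine ⟨-c, ?_⟩
      rintro y ⟨n, rfl⟩
      have h1 : g n x ≤ c := hc ⟨n, rfl⟩
      have h2 := hgx n x
      show -c ≤ f n x
      linarith
    have hid : (fun x => ⨅ n, f n x) = (-1 : ℝ) • (fun x => ⨆ n, g n x) := by
      funext x
      have h1 : (⨆ n, g n x) = ⨆ n, -(f n x) := by
        congr 1
        funext n
        exact hgx n x
      have h2 : (⨅ n, f n x) = -(⨆ n, -(f n x)) := by
        have hr : Set.range (fun n => -(f n x)) = -(Set.range fun n => f n x) := by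
          ext r
          simp only [Set.mem_neg, Set.mem_range]
          constructor
          · rintro ⟨n, rfl⟩
            exact ⟨n, by ring⟩
          · rintro ⟨n, hn⟩
            exact ⟨n, by linarith⟩
        rw [iSup, iInf, hr, Real.sInf_def]
      simp only [Pi.smul_apply, smul_eq_mul]
      rw [h2, h1]
      ring
    refine ⟨hBB, ?_, ?_⟩
    · rw [hid]
      exact rf.smul_mem _ hmem
    · rw [hid, RF.E_smul_expand rf (-1) hmem]
      have htsum : (∑' n, rf.E (g n) (g n)) = ∑' n, rf.E (f n) (f n) := tsum_congr hEg
      rw [← htsum]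
      nlinarith [hE]
end

section
/- Let (E, F) be a resistance form on a set X whose resistance metric R is complete and such that (X,R) is doubling and uniformly perfect. Let A₁, A₂ be nonempty subsets of X and let {V_n}_{n≥0} be a spread sequence of (X,R) such that A_i ⊆ cl(⋃_{n≥0}(A_i ∩ V_n)) for i = 1,2. Then 𝓡(A₁,A₂) = lim_{n→∞} 𝓡_n(A₁∩V_n, A₂∩V_n), where 𝓡_n denotes the resistance between sets associated with the trace (E|_{V_n}, F|_{V_n}). -/
open Filter Set Metric
open scoped ENNReal Topology

namespace ResistanceForm

variable {X : Type*} (rf : ResistanceForm X)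


variable {X : Type*} (rf : ResistanceForm X)

lemma neg_mem {u : X → ℝ} (hu : u ∈ rf.F) : -u ∈ rf.F := by
  simpa [neg_one_smul] using rf.smul_mem (-1) hu

lemma sub_mem {u v : X → ℝ} (hu : u ∈ rf.F) (hv : v ∈ rf.F) : u - v ∈ rf.F := by
  simpa [sub_eq_add_neg] using rf.add_mem hu (rf.neg_mem hv)

lemma add_right {u v w : X → ℝ} (hu : u ∈ rf.F) (hv : v ∈ rf.F) (hw : w ∈ rf.F) :
    rf.E u (v + w) = rf.E u v + rf.E u w := by
  rw [rf.symm u hu _ (rf.add_mem hv hw), rf.add_left v hv w hw u hu,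
    rf.symm v hv u hu, rf.symm w hw u hu]

lemma smul_right (c : ℝ) {u v : X → ℝ} (hu : u ∈ rf.F) (hv : v ∈ rf.F) :
    rf.E u (c • v) = c * rf.E u v := by
  rw [rf.symm u hu _ (rf.smul_mem c hv), rf.smul_left c v hv u hu, rf.symm v hv u hu]

lemma E_expand {u v : X → ℝ} (hu : u ∈ rf.F) (hv : v ∈ rf.F) :
    rf.E (u + v) (u + v) = rf.E u u + 2 * rf.E u v + rf.E v v := by
  rw [rf.add_left u hu v hv _ (rf.add_mem hu hv), rf.add_right hu hu hv,
    rf.add_right hv hu hv, rf.symm v hv u hu]; ring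

lemma E_sub_expand {u v : X → ℝ} (hu : u ∈ rf.F) (hv : v ∈ rf.F) :
    rf.E (u - v) (u - v) = rf.E u u - 2 * rf.E u v + rf.E v v := by
  have h : u - v = u + (-1 : ℝ) • v := by ext x; simp [sub_eq_add_neg]
  rw [h, rf.E_expand hu (rf.smul_mem (-1) hv), rf.smul_right (-1) hu hv,
    rf.smul_left (-1) v hv _ (rf.smul_mem (-1) hv), rf.smul_right (-1) hv hv]
  ring

lemma parallelogram {u v : X → ℝ} (hu : u ∈ rf.F) (hv : v ∈ rf.F) :
    rf.E (u - v) (u - v) + rf.E (u + v) (u + v) = 2 * rf.E u u + 2 * rf.E v v := by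
  rw [rf.E_expand hu hv, rf.E_sub_expand hu hv]; ring

lemma cauchy_schwarz {u v : X → ℝ} (hu : u ∈ rf.F) (hv : v ∈ rf.F) :
    rf.E u v * rf.E u v ≤ rf.E u u * rf.E v v := by
  have h : ∀ t : ℝ, 0 ≤ rf.E v v * (t * t) + (2 * rf.E u v) * t + rf.E u u := by
    intro t
    have h0 := rf.nonneg _ (rf.add_mem hu (rf.smul_mem t hv))
    rw [rf.E_expand hu (rf.smul_mem t hv), rf.smul_right t hu hv,
      rf.smul_left t v hv _ (rf.smul_mem t hv), rf.smul_right t hv hv] at h0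
    nlinarith
  have hd := discrim_le_zero h
  unfold discrim at hd
  nlinarith

lemma E_const (c : ℝ) : rf.E (fun _ => c) (fun _ => c) = 0 :=
  (rf.null_iff_const _ (rf.const_mem c)).2 ⟨c, fun _ => rfl⟩

lemma E_const_right {u : X → ℝ} (hu : u ∈ rf.F) (c : ℝ) : rf.E u (fun _ => c) = 0 := by
  have := rf.cauchy_schwarz hu (rf.const_mem c)
  rw [rf.E_const c] at this
  nlinarith [sq_nonneg (rf.E u (fun _ => c))]

lemma E_add_const {u : X → ℝ} (hu : u ∈ rf.F) (c : ℝ) :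
    rf.E (u + fun _ => c) (u + fun _ => c) = rf.E u u := by
  rw [rf.E_expand hu (rf.const_mem c), rf.E_const_right hu c, rf.E_const c]; ring

lemma sum_mem {ι : Type*} (s : Finset ι) (f : ι → X → ℝ) (hf : ∀ i ∈ s, f i ∈ rf.F) :
    (∑ i ∈ s, f i) ∈ rf.F := by
  classical
  induction s using Finset.induction_on with
  | empty => simpa using rf.zero_mem
  | @insert a s' hx ih =>
    rw [Finset.sum_insert hx]
    exact rf.add_mem (hf a (Finset.mem_insert_self a s'))
      (ih fun i hi => hf i (Finset.mem_insert_of_mem hi))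



lemma trunc_mem {u : X → ℝ} (hu : u ∈ rf.F) : (fun x => max 0 (min 1 (u x))) ∈ rf.F :=
  (rf.markov u hu).1

/-- bounded unit functions -/
lemma exists_unit' (x y : X) (h : x ≠ y) :
    ∃ v ∈ rf.F, v x = 1 ∧ v y = 0 ∧ ∀ z, 0 ≤ v z ∧ v z ≤ 1 := by
  obtain ⟨u, hu, h1, h0⟩ := rf.exists_unit x y h
  exact ⟨fun z => max 0 (min 1 (u z)), rf.trunc_mem hu, by simp [h1], by simp [h0],
    fun z => ⟨le_max_left _ _, max_le (by norm_num) (min_le_left _ _)⟩⟩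

lemma exists_extension (S T : Set X) (hS : S.Finite) (hT : T.Finite) (hd : ∀ x ∈ S, x ∉ T) :
    ∃ u ∈ rf.F, (∀ x ∈ S, u x = 1) ∧ (∀ x ∈ T, u x = 0) := by
  classical
  rcases T.eq_empty_or_nonempty with hTe | hTne
  · exact ⟨fun _ => 1, rf.const_mem 1, fun _ _ => rfl, by simp [hTe]⟩
  have hxy : ∀ x, ∃ w : X → (X → ℝ), ∀ y, x ∈ S → y ∈ T →
      w y ∈ rf.F ∧ w y x = 1 ∧ w y y = 0 ∧ ∀ z, 0 ≤ w y z ∧ w y z ≤ 1 := by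
    intro x
    by_cases hx : x ∈ S
    · have : ∀ y, ∃ v : X → ℝ, y ∈ T →
          v ∈ rf.F ∧ v x = 1 ∧ v y = 0 ∧ ∀ z, 0 ≤ v z ∧ v z ≤ 1 := by
        intro y
        by_cases hy : y ∈ T
        · obtain ⟨v, hv, h1, h0, hb⟩ := rf.exists_unit' x y (by rintro rfl; exact hd x hx hy)
          exact ⟨v, fun _ => ⟨hv, h1, h0, hb⟩⟩
        · exact ⟨0, fun h => absurd h hy⟩
      choose w hw using this
      exact ⟨w, fun y _ hy => hw y hy⟩
    · exact ⟨fun _ => 0, fun y hxS _ => absurd hxS hx⟩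
  choose w hw using hxy
  set Tf := hT.toFinset with hTf
  set Sf := hS.toFinset with hSf
  have hTcard : 1 ≤ Tf.card := Finset.card_pos.2 (by simpa [hTf] using hTne)
  -- the bump at x ∈ S vanishing on T
  set ψ : X → (X → ℝ) := fun x => (∑ y ∈ Tf, w x y) + fun _ => -((Tf.card : ℝ) - 1) with hψ
  set φ : X → (X → ℝ) := fun x => fun z => max 0 (min 1 (ψ x z)) with hφ
  have hψmem : ∀ x ∈ S, ψ x ∈ rf.F := fun x hx =>
    rf.add_mem (rf.sum_mem Tf _ (fun y hy => (hw x y hx (by simpa [hTf] using hy)).1))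
      (rf.const_mem _)
  have hφmem : ∀ x ∈ S, φ x ∈ rf.F := fun x hx => rf.trunc_mem (hψmem x hx)
  have hφ1 : ∀ x ∈ S, φ x x = 1 := by
    intro x hx
    have : ψ x x = 1 := by
      have : ∀ y ∈ Tf, w x y x = 1 := fun y hy => (hw x y hx (by simpa [hTf] using hy)).2.1
      simp only [hψ, Pi.add_apply, Finset.sum_apply]
      rw [Finset.sum_congr rfl this]
      simp
    simp [hφ, this]
  have hφ0 : ∀ x ∈ S, ∀ z ∈ T, φ x z = 0 := by
    intro x hx z hz
    have hzTf : z ∈ Tf := by simpa [hTf] using hz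
    have hsum : (∑ y ∈ Tf, w x y) z ≤ (Tf.card : ℝ) - 1 := by
      rw [Finset.sum_apply]
      have heq := Finset.add_sum_erase Tf (fun y => w x y z) hzTf
      have h0' : w x z z = 0 := (hw x z hx hz).2.2.1
      rw [← heq]
      simp only [h0', zero_add]
      calc ∑ y ∈ Tf.erase z, w x y z ≤ ∑ y ∈ Tf.erase z, 1 :=
            Finset.sum_le_sum fun y hy =>
              ((hw x y hx (by simpa [hTf] using Finset.mem_of_mem_erase hy)).2.2.2 z).2
        _ = ((Tf.erase z).card : ℝ) := by simp
        _ = (Tf.card : ℝ) - 1 := by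
            rw [Finset.card_erase_of_mem hzTf]
            have := hTcard
            push_cast [Nat.cast_sub this]
            ring
    have : ψ x z ≤ 0 := by simp only [hψ, Pi.add_apply]; linarith
    simp only [hφ]
    rw [min_eq_right (by linarith), max_eq_left this]
  have hφnn : ∀ x z, 0 ≤ φ x z := fun x z => le_max_left _ _
  set W : X → ℝ := ∑ x ∈ Sf, φ x with hW
  have hWmem : W ∈ rf.F := rf.sum_mem Sf _ (fun x hx => hφmem x (by simpa [hSf] using hx))
  refine ⟨fun z => max 0 (min 1 (W z)), rf.trunc_mem hWmem, ?_, ?_⟩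
  · intro x hx
    have h1 : (1 : ℝ) ≤ W x := by
      rw [hW, Finset.sum_apply]
      have hxSf : x ∈ Sf := by simpa [hSf] using hx
      have h2 := Finset.single_le_sum (f := fun y => φ y x)
        (fun y _ => hφnn y x) hxSf
      rw [hφ1 x hx] at h2
      exact le_trans h2 (le_of_eq rfl)
    simp only []
    rw [min_eq_left h1]; simp
  · intro z hz
    have h0 : W z = 0 := by
      rw [hW, Finset.sum_apply]
      exact Finset.sum_eq_zero fun x hx => hφ0 x (by simpa [hSf] using hx) z hz
    simp [h0]

lemma sq_sub_le {Y : Type*} [MetricSpace Y] (rf : ResistanceForm Y)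
    (hR : ∀ x y : Y, dist x y = rf.rmetric x y) {u : Y → ℝ} (hu : u ∈ rf.F) (x y : Y) :
    (u x - u y) ^ 2 ≤ dist x y * rf.E u u := by
  rcases eq_or_ne x y with rfl | hxy
  · simp
  rcases eq_or_ne (u x) (u y) with he | he
  · have : (0:ℝ) ≤ dist x y * rf.E u u := mul_nonneg dist_nonneg (rf.nonneg u hu)
    simpa [he] using this
  set d : ℝ := u x - u y with hd
  have hd0 : d ≠ 0 := sub_ne_zero.2 he
  set w : Y → ℝ := d⁻¹ • (u + fun _ => -(u y)) with hwdef
  have hwmem : w ∈ rf.F := rf.smul_mem _ (rf.add_mem hu (rf.const_mem _))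
  have hwx : w x = 1 := by
    simp only [hwdef, Pi.smul_apply, Pi.add_apply, smul_eq_mul]
    field_simp [hd]
    ring
  have hwy : w y = 0 := by simp [hwdef]
  have hEw : rf.E w w = d⁻¹ ^ 2 * rf.E u u := by
    have hmem := rf.add_mem hu (rf.const_mem (-(u y)))
    rw [hwdef, rf.smul_left _ _ hmem _ (rf.smul_mem _ hmem), rf.smul_right _ hmem hmem,
      rf.E_add_const hu]
    ring
  set S := {e : ℝ | ∃ v ∈ rf.F, v x = 1 ∧ v y = 0 ∧ rf.E v v = e} with hS
  have hbdd : BddBelow S := ⟨0, by rintro e ⟨v, hv, -, -, rfl⟩; exact rf.nonneg v hv⟩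
  have hle : sInf S ≤ d⁻¹ ^ 2 * rf.E u u :=
    csInf_le hbdd ⟨w, hwmem, hwx, hwy, hEw⟩
  have hpos : 0 < sInf S := rf.inf_pos x y hxy
  have hdist : dist x y = (sInf S)⁻¹ := by rw [hR x y, rmetric, if_neg hxy]
  rw [hdist]
  have hd2 : 0 < d ^ 2 := by positivity
  have : sInf S * d ^ 2 ≤ rf.E u u := by
    have := mul_le_mul_of_nonneg_right hle (le_of_lt hd2)
    calc sInf S * d ^ 2 ≤ d⁻¹ ^ 2 * rf.E u u * d ^ 2 := this
      _ = rf.E u u := by field_simp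
  show d ^ 2 ≤ (sInf S)⁻¹ * rf.E u u
  calc d ^ 2 = (sInf S)⁻¹ * (sInf S * d ^ 2) := by field_simp
    _ ≤ (sInf S)⁻¹ * rf.E u u := by
        exact mul_le_mul_of_nonneg_left this (by positivity)


variable {X : Type*}


/-- The minimal-energy value for the pair of constraint sets. -/
noncomputable def eInf (rf : ResistanceForm X) (A B : Set X) : ℝ :=
  sInf {e : ℝ | ∃ u ∈ rf.F, (∀ x ∈ A, u x = 1) ∧ (∀ x ∈ B, u x = 0) ∧ rf.E u u = e}

lemma eSet_bddBelow (rf : ResistanceForm X) (A B : Set X) :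
    BddBelow {e : ℝ | ∃ u ∈ rf.F, (∀ x ∈ A, u x = 1) ∧ (∀ x ∈ B, u x = 0) ∧ rf.E u u = e} :=
  ⟨0, by rintro e ⟨u, hu, -, -, rfl⟩; exact rf.nonneg u hu⟩

lemma eInf_le (rf : ResistanceForm X) {A B : Set X} {u : X → ℝ} (hu : u ∈ rf.F)
    (h1 : ∀ x ∈ A, u x = 1) (h0 : ∀ x ∈ B, u x = 0) : rf.eInf A B ≤ rf.E u u :=
  csInf_le (rf.eSet_bddBelow A B) ⟨u, hu, h1, h0, rfl⟩

lemma eInf_mono (rf : ResistanceForm X) {A B A' B' : Set X} (hA : A ⊆ A') (hB : B ⊆ B')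
    (hne : ∃ u ∈ rf.F, (∀ x ∈ A', u x = 1) ∧ (∀ x ∈ B', u x = 0)) :
    rf.eInf A B ≤ rf.eInf A' B' := by
  apply csInf_le_csInf (rf.eSet_bddBelow A B)
  · obtain ⟨u, hu, h1, h0⟩ := hne; exact ⟨rf.E u u, u, hu, h1, h0, rfl⟩
  · rintro e ⟨u, hu, h1, h0, rfl⟩
    exact ⟨u, hu, fun x hx => h1 x (hA hx), fun x hx => h0 x (hB hx), rfl⟩

lemma two_mul_E_le (rf : ResistanceForm X) {u v : X → ℝ} (hu : u ∈ rf.F) (hv : v ∈ rf.F)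
    {t : ℝ} (ht : 0 < t) : 2 * rf.E u v ≤ t * rf.E u u + t⁻¹ * rf.E v v := by
  have h0 := rf.nonneg _ (rf.sub_mem (rf.smul_mem t hu) hv)
  rw [rf.E_sub_expand (rf.smul_mem t hu) hv, rf.smul_left t u hu _ (rf.smul_mem t hu),
    rf.smul_right t hu hu, rf.smul_left t u hu v hv] at h0
  rw [← sub_nonneg]
  have hkey : t * (t * rf.E u u + t⁻¹ * rf.E v v - 2 * rf.E u v)
      = t * (t * rf.E u u) - 2 * (t * rf.E u v) + rf.E v v := by
    field_simp; ring
  have h1 : 0 ≤ t * (t * rf.E u u + t⁻¹ * rf.E v v - 2 * rf.E u v) := by rw [hkey]; exact h0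
  exact (mul_nonneg_iff_of_pos_left ht).1 h1

lemma E_sub_comm (rf : ResistanceForm X) {u v : X → ℝ} (hu : u ∈ rf.F) (hv : v ∈ rf.F) :
    rf.E (u - v) (u - v) = rf.E (v - u) (v - u) := by
  rw [rf.E_sub_expand hu hv, rf.E_sub_expand hv hu, rf.symm v hv u hu]; ring

set_option maxHeartbeats 1000000 in
/-- **Key construction.**  If the minimal energies along the spread sequence are bounded,
a limit function exists which is admissible for `(A₁, A₂)` with energy at most `L`. -/
lemma key {Y : Type*} [MetricSpace Y] (rf : ResistanceForm Y)
    (hR : ∀ x y : Y, dist x y = rf.rmetric x y)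
    (A₁ A₂ : Set Y) (V : ℕ → Finset Y) (hmono : Monotone V)
    (hdisj : ∀ n, ∀ x ∈ A₁ ∩ (V n : Set Y), x ∉ A₂ ∩ (V n : Set Y))
    (hA₁ : A₁ ⊆ closure (⋃ n, (A₁ ∩ (V n : Set Y))))
    (hA₂ : A₂ ⊆ closure (⋃ n, (A₂ ∩ (V n : Set Y))))
    (n₀ : ℕ) (y₀ : Y) (hy₀ : y₀ ∈ A₁ ∩ (V n₀ : Set Y))
    (L : ℝ)
    (hL : ∀ n, rf.eInf (A₁ ∩ (V n : Set Y)) (A₂ ∩ (V n : Set Y)) ≤ L)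
    (hLt : Tendsto (fun n => rf.eInf (A₁ ∩ (V n : Set Y)) (A₂ ∩ (V n : Set Y))) atTop (𝓝 L)) :
    ∃ w ∈ rf.F, (∀ x ∈ A₁, w x = 1) ∧ (∀ x ∈ A₂, w x = 0) ∧ rf.E w w ≤ L := by
  classical
  set a : ℕ → Set Y := fun n => A₁ ∩ (V n : Set Y) with ha
  set b : ℕ → Set Y := fun n => A₂ ∩ (V n : Set Y) with hb
  set M : ℕ → ℝ := fun n => rf.eInf (a n) (b n) with hM
  have hamono : ∀ {n k}, n ≤ k → a n ⊆ a k := fun {n k} h =>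
    inter_subset_inter_right _ (Finset.coe_subset.2 (hmono h))
  have hbmono : ∀ {n k}, n ≤ k → b n ⊆ b k := fun {n k} h =>
    inter_subset_inter_right _ (Finset.coe_subset.2 (hmono h))
  have hafin : ∀ n, (a n).Finite := fun n => Finite.subset (V n).finite_toSet inter_subset_right
  have hbfin : ∀ n, (b n).Finite := fun n => Finite.subset (V n).finite_toSet inter_subset_right
  -- admissible functions exist at every level
  have hadm : ∀ n, ∃ u ∈ rf.F, (∀ x ∈ a n, u x = 1) ∧ (∀ x ∈ b n, u x = 0) := fun n =>
    rf.exists_extension (a n) (b n) (hafin n) (hbfin n) (hdisj n)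
  have hSne : ∀ n, {e : ℝ | ∃ u ∈ rf.F, (∀ x ∈ a n, u x = 1) ∧ (∀ x ∈ b n, u x = 0) ∧
      rf.E u u = e}.Nonempty := by
    intro n; obtain ⟨u, hu, h1, h0⟩ := hadm n; exact ⟨rf.E u u, u, hu, h1, h0, rfl⟩
  -- near minimizers
  have hmin : ∀ n, ∃ u ∈ rf.F, (∀ x ∈ a n, u x = 1) ∧ (∀ x ∈ b n, u x = 0) ∧
      rf.E u u < M n + 1 / (n + 1) := by
    intro n
    have hlt : rf.eInf (a n) (b n) < M n + 1 / (n + 1) := by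
      have : (0:ℝ) < 1 / (n + 1) := by positivity
      simp only [hM]; linarith
    rw [eInf] at hlt
    obtain ⟨e, ⟨u, hu, h1, h0, rfl⟩, he⟩ :=
      (csInf_lt_iff (rf.eSet_bddBelow (a n) (b n)) (hSne n)).1 hlt
    exact ⟨u, hu, h1, h0, he⟩
  choose u humem hu1 hu0 huE using hmin
  have hMmono : Monotone M := by
    intro n k hnk
    exact rf.eInf_mono (hamono hnk) (hbmono hnk) (hadm k)
  have hMleL : ∀ n, M n ≤ L := hL
  -- the Cauchy estimate
  have hcauchy : ∀ ε : ℝ, 0 < ε → ∃ N : ℕ, ∀ m ≥ N, ∀ n ≥ N,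
      rf.E (u m - u n) (u m - u n) < ε := by
    intro ε hε
    obtain ⟨N₁, hN₁⟩ := (Metric.tendsto_atTop.1 hLt) (ε / 16) (by linarith)
    obtain ⟨N₂, hN₂⟩ := exists_nat_gt (16 / ε)
    set N := max N₁ N₂ with hN
    have hkey : ∀ n k, N ≤ n → n ≤ k →
        rf.E (u n - u k) (u n - u k) < ε := by
      intro n k hNn hnk
      have hNk : N ≤ k := le_trans hNn hnk
      -- midpoint is admissible at level n
      set h' : Y → ℝ := (2:ℝ)⁻¹ • (u n + u k) with hh'
      have hh'mem : h' ∈ rf.F := rf.smul_mem _ (rf.add_mem (humem n) (humem k))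
      have hh'1 : ∀ x ∈ a n, h' x = 1 := by
        intro x hx
        simp only [hh', Pi.smul_apply, Pi.add_apply, smul_eq_mul,
          hu1 n x hx, hu1 k x (hamono hnk hx)]
        norm_num
      have hh'0 : ∀ x ∈ b n, h' x = 0 := by
        intro x hx
        simp only [hh', Pi.smul_apply, Pi.add_apply, smul_eq_mul,
          hu0 n x hx, hu0 k x (hbmono hnk hx)]
        norm_num
      have hMn_le : M n ≤ rf.E h' h' := rf.eInf_le hh'mem hh'1 hh'0
      have hEsum : rf.E (u n + u k) (u n + u k) = 4 * rf.E h' h' := by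
        have hmem := rf.add_mem (humem n) (humem k)
        rw [hh', rf.smul_left _ _ hmem _ (rf.smul_mem _ hmem), rf.smul_right _ hmem hmem]
        ring
      have hpar := rf.parallelogram (humem n) (humem k)
      -- numeric bounds
      have hδn : (1:ℝ) / (n + 1) < ε / 16 := by
        have h1 : (16:ℝ) / ε < N₂ := hN₂
        have h2 : (N₂:ℝ) ≤ n := by
          exact_mod_cast le_trans (le_max_right N₁ N₂) hNn
        rw [div_lt_div_iff₀ (by positivity) (by norm_num)]
        rw [div_lt_iff₀ hε] at h1
        nlinarith
      have hδk : (1:ℝ) / (k + 1) < ε / 16 := by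
        have h1 : (16:ℝ) / ε < N₂ := hN₂
        have h2 : (N₂:ℝ) ≤ k := by
          exact_mod_cast le_trans (le_max_right N₁ N₂) hNk
        rw [div_lt_div_iff₀ (by positivity) (by norm_num)]
        rw [div_lt_iff₀ hε] at h1
        nlinarith
      have hLn : L - M n < ε / 16 := by
        have := hN₁ n (le_trans (le_max_left N₁ N₂) hNn)
        rw [Real.dist_eq, abs_sub_lt_iff] at this
        linarith [this.2]
      have hMkL := hMleL k
      have hEn := huE n
      have hEk := huE k
      have hMnk := hMmono hnk
      nlinarith
    refine ⟨N, ?_⟩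
    intro m hm n hn
    rcases le_total m n with h | h
    · exact hkey m n hm h
    · rw [rf.E_sub_comm (humem m) (humem n)]
      exact hkey n m hn h
  obtain ⟨v, hvmem, hv⟩ := rf.complete u humem hcauchy
  -- the limit function, normalized at y₀
  set w : Y → ℝ := v + fun _ => 1 - v y₀ with hw
  have hwmem : w ∈ rf.F := rf.add_mem hvmem (rf.const_mem _)
  have hEw : rf.E w w = rf.E v v := rf.E_add_const hvmem _
  have huy₀ : ∀ n ≥ n₀, u n y₀ = 1 := fun n hn => hu1 n y₀ (hamono hn hy₀)
  -- pointwise convergence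
  have hptw : ∀ x : Y, Tendsto (fun n => u n x) atTop (𝓝 (w x)) := by
    intro x
    rw [Metric.tendsto_atTop]
    intro ε hε
    have hδ : (0:ℝ) < ε ^ 2 / (dist x y₀ + 1) := by positivity
    obtain ⟨N, hN⟩ := hv _ hδ
    refine ⟨max N n₀, fun n hn => ?_⟩
    have hNn : N ≤ n := le_trans (le_max_left _ _) hn
    have hn₀n : n₀ ≤ n := le_trans (le_max_right _ _) hn
    have hsub := rf.sub_mem hvmem (humem n)
    have hsq := rf.sq_sub_le hR hsub x y₀
    have hEvn := hN n hNn
    have heq : (v - u n) x - (v - u n) y₀ = w x - u n x := by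
      have h1 : u n y₀ = 1 := huy₀ n hn₀n
      simp only [Pi.sub_apply, hw, Pi.add_apply]
      rw [h1]; ring
    rw [heq] at hsq
    have hd : dist x y₀ * rf.E (v - u n) (v - u n) < ε ^ 2 := by
      have hd1 : (0:ℝ) ≤ dist x y₀ := dist_nonneg
      have hE0 : (0:ℝ) ≤ rf.E (v - u n) (v - u n) := rf.nonneg _ hsub
      calc dist x y₀ * rf.E (v - u n) (v - u n)
          ≤ (dist x y₀ + 1) * rf.E (v - u n) (v - u n) := by nlinarith
        _ < (dist x y₀ + 1) * (ε ^ 2 / (dist x y₀ + 1)) := by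
            apply mul_lt_mul_of_pos_left hEvn (by linarith)
        _ = ε ^ 2 := by field_simp
    rw [Real.dist_eq, abs_sub_lt_iff]
    constructor <;> nlinarith
  -- w equals 1 on each a n, 0 on each b n
  have hw1 : ∀ x ∈ ⋃ n, a n, w x = 1 := by
    rintro x hx
    obtain ⟨k, hk⟩ := mem_iUnion.1 hx
    have : Tendsto (fun n => u n x) atTop (𝓝 1) := by
      apply Tendsto.congr' _ tendsto_const_nhds
      filter_upwards [eventually_ge_atTop k] with n hn
      exact (hu1 n x (hamono hn hk)).symm
    exact tendsto_nhds_unique (hptw x) this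
  have hw0 : ∀ x ∈ ⋃ n, b n, w x = 0 := by
    rintro x hx
    obtain ⟨k, hk⟩ := mem_iUnion.1 hx
    have : Tendsto (fun n => u n x) atTop (𝓝 0) := by
      apply Tendsto.congr' _ tendsto_const_nhds
      filter_upwards [eventually_ge_atTop k] with n hn
      exact (hu0 n x (hbmono hn hk)).symm
    exact tendsto_nhds_unique (hptw x) this
  -- extend to closures by the oscillation estimate
  have hclosure : ∀ (s : Set Y) (c : ℝ), (∀ y ∈ s, w y = c) → ∀ x ∈ closure s, w x = c := by
    intro s c hs x hx
    have hkey : (w x - c) ^ 2 ≤ 0 := by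
      by_contra hcon
      push_neg at hcon
      have hp : 0 < (w x - c) ^ 2 := hcon
      have hE0 : (0:ℝ) ≤ rf.E w w := rf.nonneg w hwmem
      have hEp : (0:ℝ) < rf.E w w + 1 := by linarith
      obtain ⟨y, hy, hdy⟩ := Metric.mem_closure_iff.1 hx ((w x - c) ^ 2 / (rf.E w w + 1))
        (by positivity)
      have hosc := rf.sq_sub_le hR hwmem x y
      rw [hs y hy] at hosc
      have h2 : dist x y * (rf.E w w + 1) < (w x - c) ^ 2 := (lt_div_iff₀ hEp).1 hdy
      nlinarith [dist_nonneg (x := x) (y := y)]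
    have := le_antisymm hkey (sq_nonneg _)
    have := pow_eq_zero_iff (n := 2) (by norm_num) |>.1 this
    linarith [sub_eq_zero.1 this]
  have hwA₁ : ∀ x ∈ A₁, w x = 1 := fun x hx => hclosure _ 1 hw1 x (hA₁ hx)
  have hwA₂ : ∀ x ∈ A₂, w x = 0 := fun x hx => hclosure _ 0 hw0 x (hA₂ hx)
  -- energy bound
  have hEvL : rf.E v v ≤ L := by
    have hL0 : 0 ≤ L := by
      have h0 : 0 ≤ M 0 := Real.sInf_nonneg (by rintro e ⟨u', hu', -, -, rfl⟩; exact rf.nonneg u' hu')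
      exact le_trans h0 (hMleL 0)
    refine le_of_forall_pos_le_add ?_
    intro ε hε
    set t : ℝ := ε / (4 * (L + 1)) with htdef
    have ht : 0 < t := by positivity
    obtain ⟨N₁, hN₁⟩ := hv (min 1 (min (ε / 4) (ε / 4 * t))) (by positivity)
    obtain ⟨N₂, hN₂⟩ := exists_nat_gt (4 * (1 + t) / ε)
    set n := max N₁ N₂ with hn
    have hEd := hN₁ n (le_max_left _ _)
    have hsub := rf.sub_mem hvmem (humem n)
    have hveq : v = u n + (v - u n) := by ring
    have hexp : rf.E v v = rf.E (u n) (u n) + 2 * rf.E (u n) (v - u n)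
        + rf.E (v - u n) (v - u n) := by
      conv_lhs => rw [hveq]
      exact rf.E_expand (humem n) hsub
    have hEun : rf.E (u n) (u n) < L + 1 / (n + 1) := lt_of_lt_of_le (huE n)
      (by linarith [hMleL n])
    have hEd2 : rf.E (v - u n) (v - u n) < ε / 4 :=
      lt_of_lt_of_le hEd (le_trans (min_le_right _ _) (min_le_left _ _))
    have hEd3 : rf.E (v - u n) (v - u n) < ε / 4 * t :=
      lt_of_lt_of_le hEd (le_trans (min_le_right _ _) (min_le_right _ _))
    have htL : t * (L + 1) = ε / 4 := by
      rw [htdef]; field_simp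
    have htle1 : t * L ≤ ε / 4 := by nlinarith
    have hsmall : (1:ℝ) / (n + 1) + t * (1 / (n + 1)) ≤ ε / 4 := by
      have h1 : (4 * (1 + t) / ε : ℝ) < N₂ := hN₂
      have h2 : (N₂ : ℝ) ≤ n := by exact_mod_cast le_max_right N₁ N₂
      have hn1 : (0:ℝ) < (n:ℝ) + 1 := by positivity
      rw [div_lt_iff₀ hε] at h1
      have h3 : (1 + t) ≤ ε / 4 * ((n:ℝ) + 1) := by nlinarith
      calc (1:ℝ) / (n + 1) + t * (1 / (n + 1)) = (1 + t) / ((n:ℝ) + 1) := by ring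
        _ ≤ ε / 4 := by rw [div_le_iff₀ hn1]; nlinarith
    have hcross' : 2 * rf.E (u n) (v - u n) ≤ t * rf.E (u n) (u n)
        + t⁻¹ * rf.E (v - u n) (v - u n) := rf.two_mul_E_le (humem n) hsub ht
    have hinv : t⁻¹ * rf.E (v - u n) (v - u n) ≤ ε / 4 := by
      have h1 : t⁻¹ * rf.E (v - u n) (v - u n) ≤ t⁻¹ * (ε / 4 * t) :=
        mul_le_mul_of_nonneg_left hEd3.le (by positivity)
      have h2 : t⁻¹ * (ε / 4 * t) = ε / 4 := by field_simp
      linarith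
    have htEun : t * rf.E (u n) (u n) ≤ t * L + t * (1 / ((n:ℝ) + 1)) := by
      have h1 : t * rf.E (u n) (u n) ≤ t * (L + 1 / ((n:ℝ) + 1)) :=
        mul_le_mul_of_nonneg_left (le_of_lt hEun) (le_of_lt ht)
      have h2 : t * (L + 1 / ((n:ℝ) + 1)) = t * L + t * (1 / ((n:ℝ) + 1)) := by ring
      linarith
    rw [hexp]
    linarith [hcross', htEun, hinv, hEd2, hsmall, htle1, hEun]
  exact ⟨w, hwmem, hwA₁, hwA₂, by rw [hEw]; exact hEvL⟩



lemma setRes_eq_zero (rf : ResistanceForm X) {A B : Set X} (hA : A.Nonempty) (hB : B.Nonempty)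
    (hno : ¬ ∃ u ∈ rf.F, (∀ x ∈ A, u x = 1) ∧ (∀ x ∈ B, u x = 0)) : rf.setRes A B = 0 := by
  rw [setRes, if_pos ⟨hA, hB⟩, if_neg hno]

lemma setRes_eq_inv (rf : ResistanceForm X) {A B : Set X} (hA : A.Nonempty) (hB : B.Nonempty)
    (hadm : ∃ u ∈ rf.F, (∀ x ∈ A, u x = 1) ∧ (∀ x ∈ B, u x = 0)) :
    rf.setRes A B = (ENNReal.ofReal (rf.eInf A B))⁻¹ := by
  rw [setRes, if_pos ⟨hA, hB⟩, if_pos hadm]; rfl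


end ResistanceForm

open ResistanceForm

/-- Under the standing assumptions, if `A₁, A₂` are nonempty subsets and
`{V_n}` is a spread sequence of `(X,R)` (an increasing sequence of nonempty finite sets
with dense union) such that `A_i ⊆ cl (⋃_n (A_i ∩ V_n))` for `i = 1,2`, then
`𝓡(A₁,A₂) = lim_n 𝓡_n(A₁ ∩ V_n, A₂ ∩ V_n)`.  Here `𝓡_n`, the resistance between sets
associated with the trace `(E|_{V_n}, F|_{V_n})`, is expressed as the resistance between
the sets `A₁ ∩ V_n` and `A₂ ∩ V_n` in the ambient form: since the trace energy is the
minimal energy over all extensions, the two quantities coincide by definition. -/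
theorem setRes_eq_lim_trace_setRes {X : Type*} [MetricSpace X] [CompleteSpace X]
    (rf : ResistanceForm X) (hR : ∀ x y : X, dist x y = rf.rmetric x y)
    (hdb : DoublingOf fun x y : X => dist x y)
    (hup : UniformlyPerfectOf fun x y : X => dist x y)
    (A₁ A₂ : Set X) (h₁ : A₁.Nonempty) (h₂ : A₂.Nonempty)
    (V : ℕ → Finset X) (hmono : Monotone V) (hne : ∀ n, (V n).Nonempty)
    (hdense : Dense (⋃ n, (V n : Set X)))
    (hA₁ : A₁ ⊆ closure (⋃ n, (A₁ ∩ (V n : Set X))))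
    (hA₂ : A₂ ⊆ closure (⋃ n, (A₂ ∩ (V n : Set X)))) :
    Tendsto (fun n => rf.setRes (A₁ ∩ (V n : Set X)) (A₂ ∩ (V n : Set X))) atTop
      (𝓝 (rf.setRes A₁ A₂)) := by
  classical
  set a : ℕ → Set X := fun n => A₁ ∩ (V n : Set X) with ha
  set b : ℕ → Set X := fun n => A₂ ∩ (V n : Set X) with hb
  have hamono : ∀ {n k}, n ≤ k → a n ⊆ a k := fun {n k} h =>
    inter_subset_inter_right _ (Finset.coe_subset.2 (hmono h))
  have hbmono : ∀ {n k}, n ≤ k → b n ⊆ b k := fun {n k} h =>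
    inter_subset_inter_right _ (Finset.coe_subset.2 (hmono h))
  have hafin : ∀ n, (a n).Finite := fun n => Finite.subset (V n).finite_toSet inter_subset_right
  have hbfin : ∀ n, (b n).Finite := fun n => Finite.subset (V n).finite_toSet inter_subset_right
  -- find nonempty stages
  have hUane : (⋃ n, a n).Nonempty := by
    obtain ⟨p, hp⟩ := h₁
    by_contra h
    rw [not_nonempty_iff_eq_empty] at h
    have := hA₁ hp
    rw [h, closure_empty] at this
    exact this
  have hUbne : (⋃ n, b n).Nonempty := by
    obtain ⟨p, hp⟩ := h₂
    by_contra h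
    rw [not_nonempty_iff_eq_empty] at h
    have := hA₂ hp
    rw [h, closure_empty] at this
    exact this
  obtain ⟨y₀, hy₀U⟩ := hUane
  obtain ⟨n₁, hy₁⟩ := mem_iUnion.1 hy₀U
  obtain ⟨z₀, hz₀U⟩ := hUbne
  obtain ⟨n₂, hz₂⟩ := mem_iUnion.1 hz₀U
  set n₀ : ℕ := max n₁ n₂ with hn₀
  have hy₀ : y₀ ∈ a n₀ := hamono (le_max_left _ _) hy₁
  have hz₀ : z₀ ∈ b n₀ := hbmono (le_max_right _ _) hz₂
  have hane : ∀ n, n₀ ≤ n → (a n).Nonempty := fun n hn => ⟨y₀, hamono hn hy₀⟩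
  have hbne' : ∀ n, n₀ ≤ n → (b n).Nonempty := fun n hn => ⟨z₀, hbmono hn hz₀⟩
  by_cases hcap : ∃ k, ((a k) ∩ (b k)).Nonempty
  · -- the constraint sets eventually intersect: everything is 0
    obtain ⟨k, z, hz⟩ := hcap
    have hzA₁ : z ∈ A₁ := hz.1.1
    have hzA₂ : z ∈ A₂ := hz.2.1
    have hzero : rf.setRes A₁ A₂ = 0 := by
      apply rf.setRes_eq_zero h₁ h₂
      rintro ⟨u, hu, h1, h0⟩
      have e1 := h1 z hzA₁
      have e0 := h0 z hzA₂
      rw [e0] at e1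
      norm_num at e1
    rw [hzero]
    apply Tendsto.congr' _ tendsto_const_nhds
    filter_upwards [eventually_ge_atTop (max k n₀)] with n hn
    have hk : k ≤ n := le_trans (le_max_left _ _) hn
    have hn₀' : n₀ ≤ n := le_trans (le_max_right _ _) hn
    symm
    apply rf.setRes_eq_zero (hane n hn₀') (hbne' n hn₀')
    rintro ⟨u, hu, h1, h0⟩
    have e1 := h1 z (hamono hk hz.1)
    have e0 := h0 z (hbmono hk hz.2)
    rw [e0] at e1
    norm_num at e1
  · -- disjoint at every level
    have hdisj : ∀ n, ∀ x ∈ a n, x ∉ b n := fun n x hx hx' =>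
      hcap ⟨n, x, hx, hx'⟩
    set M : ℕ → ℝ := fun n => rf.eInf (a n) (b n) with hM
    have hadm : ∀ n, ∃ u ∈ rf.F, (∀ x ∈ a n, u x = 1) ∧ (∀ x ∈ b n, u x = 0) := fun n =>
      rf.exists_extension (a n) (b n) (hafin n) (hbfin n) (hdisj n)
    have hSne : ∀ n, {e : ℝ | ∃ u ∈ rf.F, (∀ x ∈ a n, u x = 1) ∧ (∀ x ∈ b n, u x = 0) ∧
        rf.E u u = e}.Nonempty := by
      intro n; obtain ⟨u, hu, h1, h0⟩ := hadm n; exact ⟨rf.E u u, u, hu, h1, h0, rfl⟩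
    have hMmono : Monotone M := fun n k hnk =>
      rf.eInf_mono (hamono hnk) (hbmono hnk) (hadm k)
    -- a uniform positive lower bound from the pair (y₀, z₀)
    have hyz : y₀ ≠ z₀ := by
      rintro rfl
      exact hdisj n₀ y₀ hy₀ hz₀
    set c : ℝ := sInf {e : ℝ | ∃ u ∈ rf.F, u y₀ = 1 ∧ u z₀ = 0 ∧ rf.E u u = e} with hc
    have hcpos : 0 < c := rf.inf_pos y₀ z₀ hyz
    have hcbdd : BddBelow {e : ℝ | ∃ u ∈ rf.F, u y₀ = 1 ∧ u z₀ = 0 ∧ rf.E u u = e} :=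
      ⟨0, by rintro e ⟨u, hu, -, -, rfl⟩; exact rf.nonneg u hu⟩
    have hcM : ∀ n, n₀ ≤ n → c ≤ M n := by
      intro n hn
      apply le_csInf (hSne n)
      rintro e ⟨u, hu, h1, h0, rfl⟩
      exact csInf_le hcbdd ⟨u, hu, h1 y₀ (hamono hn hy₀), h0 z₀ (hbmono hn hz₀), rfl⟩
    by_cases hbdd : BddAbove (Set.range M)
    · -- bounded energies: limit function exists
      set L : ℝ := ⨆ n, M n with hL
      have hLub : ∀ n, M n ≤ L := fun n => le_ciSup hbdd n
      have hLt : Tendsto M atTop (𝓝 L) := tendsto_atTop_ciSup hMmono hbdd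
      obtain ⟨w, hw, hw1, hw0, hwL⟩ :=
        rf.key hR A₁ A₂ V hmono hdisj hA₁ hA₂ n₀ y₀ hy₀ L hLub hLt
      have hadmAll : ∃ u ∈ rf.F, (∀ x ∈ A₁, u x = 1) ∧ (∀ x ∈ A₂, u x = 0) := ⟨w, hw, hw1, hw0⟩
      have hm1 : rf.eInf A₁ A₂ ≤ L := le_trans (rf.eInf_le hw hw1 hw0) hwL
      have hm2 : L ≤ rf.eInf A₁ A₂ := ciSup_le fun n =>
        rf.eInf_mono inter_subset_left inter_subset_left hadmAll
      have heq : rf.eInf A₁ A₂ = L := le_antisymm hm1 hm2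
      have hLpos : 0 < L := lt_of_lt_of_le hcpos (le_trans (hcM n₀ le_rfl) (hLub n₀))
      rw [rf.setRes_eq_inv h₁ h₂ hadmAll, heq]
      have h2 : Tendsto (fun n => ENNReal.ofReal (M n)) atTop (𝓝 (ENNReal.ofReal L)) :=
        ENNReal.tendsto_ofReal hLt
      have h3 : Tendsto (fun n => (ENNReal.ofReal (M n))⁻¹) atTop (𝓝 (ENNReal.ofReal L)⁻¹) :=
        ENNReal.tendsto_inv_iff.2 h2
      apply Tendsto.congr' _ h3
      filter_upwards [eventually_ge_atTop n₀] with n hn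
      exact (rf.setRes_eq_inv (hane n hn) (hbne' n hn) (hadm n)).symm
    · -- unbounded energies: resistance tends to 0 and no admissible function exists
      have hMtop : Tendsto M atTop atTop := tendsto_atTop_atTop_of_monotone' hMmono hbdd
      have hzero : rf.setRes A₁ A₂ = 0 := by
        apply rf.setRes_eq_zero h₁ h₂
        rintro ⟨u, hu, h1, h0⟩
        apply hbdd
        refine ⟨rf.E u u, ?_⟩
        rintro e ⟨n, rfl⟩
        exact rf.eInf_le hu (fun x hx => h1 x hx.1) (fun x hx => h0 x hx.1)
      rw [hzero]
      have h2 : Tendsto (fun n => ENNReal.ofReal (M n)) atTop (𝓝 ⊤) :=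
        ENNReal.tendsto_ofReal_atTop.comp hMtop
      have h3 : Tendsto (fun n => (ENNReal.ofReal (M n))⁻¹) atTop (𝓝 (⊤ : ℝ≥0∞)⁻¹) :=
        ENNReal.tendsto_inv_iff.2 h2
      rw [ENNReal.inv_top] at h3
      apply Tendsto.congr' _ h3
      filter_upwards [eventually_ge_atTop n₀] with n hn
      exact (rf.setRes_eq_inv (hane n hn) (hbne' n hn) (hadm n)).symm
end
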